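/- Linear PTAR are strictly less expressive than PTAR: every linear PTAR is a PTAR, and there is a PTAR-recognizable (indeed PTA-recognizable) tree language, namely L₃ = {γⁿ(σ(γⁿ#,γⁿ#)) | n ∈ ℕ}, that no linear PTAR recognizes. -/

import Mathlib

/-! ## Trees over ranked alphabets: a symbol `s` has `ar s` children -/

inductive GTree (S : Type) (ar : S → ℕ) : Type where
  | node (s : S) (c : Fin (ar s) → GTree S ar) : GTree S ar

namespace GTree
variable {S : Type} {ar : S → ℕ}

/-- The height of a tree (leaves have height 0). -/
def height : GTree S ar → ℕ
  | node _ c => Finset.univ.sup fun i => height (c i) + 1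

/-- The size (number of positions) of a tree. -/
def size : GTree S ar → ℕ
  | node _ c => 1 + ∑ i, size (c i)

/-- The subtree at a position (a list of child indices), if the position exists. -/
def subAt : GTree S ar → List ℕ → Option (GTree S ar)
  | t, [] => some t
  | node s c, i :: ρ => if h : i < ar s then subAt (c ⟨i, h⟩) ρ else none

/-- The list of path words of all complete (root-to-leaf) paths. -/
def pathWords : GTree S ar → List (List S)
  | node s c =>
    if _ : ar s = 0 then [[s]]
    else ((List.finRange (ar s)).map fun i => (pathWords (c i)).map (s :: ·)).flatten

end GTree

/-! ## Semilinear sets -/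

def IsLinearSetN {m : ℕ} (C : Set (Fin m → ℕ)) : Prop :=
  ∃ (l : ℕ) (d0 : Fin m → ℕ) (d : Fin l → Fin m → ℕ),
    C = {v | ∃ c : Fin l → ℕ, v = d0 + ∑ i, c i • d i}

def IsSemilinear {m : ℕ} (C : Set (Fin m → ℕ)) : Prop :=
  ∃ (k : ℕ) (L : Fin k → Set (Fin m → ℕ)), (∀ i, IsLinearSetN (L i)) ∧ C = ⋃ i, L i

/-! ## Non-global Parikh tree automata with reset (PTAR) -/

/-- Update of a counter vector: add `d`, or reset to `0` for `↺` (`none`). -/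
def updW {m : ℕ} (w : Fin m → ℕ) : Option (Fin m → ℕ) → Fin m → ℕ
  | some d => w + d
  | none => 0

structure PTAR (S : Type) (ar : S → ℕ) (m : ℕ) where
  Q : Type
  finQ : Fintype Q
  init : Q
  D : Finset (Fin m → ℕ)
  trans : Q → (s : S) → (Fin (ar s) → Q × Option (Fin m → ℕ)) → Prop
  transD : ∀ q s f, trans q s f → ∀ i d, (f i).2 = some d → d ∈ D
  C : Set (Fin m → ℕ)
  semiC : IsSemilinear C

inductive PTAR.Acc {S : Type} {ar : S → ℕ} {m : ℕ} (A : PTAR S ar m) :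
    A.Q → (Fin m → ℕ) → GTree S ar → Prop where
  | node {q : A.Q} {w : Fin m → ℕ} {s : S} {f : Fin (ar s) → A.Q × Option (Fin m → ℕ)}
      {c : Fin (ar s) → GTree S ar}
      (ht : A.trans q s f) (hC : ar s = 0 → w ∈ A.C)
      (hc : ∀ i, PTAR.Acc A (f i).1 (updW w (f i).2) (c i)) :
      PTAR.Acc A q w (.node s c)

def PTAR.Lang {S : Type} {ar : S → ℕ} {m : ℕ} (A : PTAR S ar m) : Set (GTree S ar) :=
  {ξ | A.Acc A.init 0 ξ}

/-- A PTAR is linear if every transition passes the counter configuration to at most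
one child; all other children are reset. -/
def PTAR.IsLinear {S : Type} {ar : S → ℕ} {m : ℕ} (A : PTAR S ar m) : Prop :=
  ∀ q s f, A.trans q s f → ∀ i j, (f i).2 ≠ none → (f j).2 ≠ none → i = j

/-! ## The ranked alphabet {σ⁽²⁾, γ⁽¹⁾, #⁽⁰⁾} -/

inductive Sg : Type where | sig | gam | hash
  deriving DecidableEq

def arG : Sg → ℕ
  | .sig => 2
  | .gam => 1
  | .hash => 0

instance : Fintype Sg :=
  ⟨⟨{Sg.sig, Sg.gam, Sg.hash}, by decide⟩, fun x => by cases x <;> decide⟩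

def hashT : GTree Sg arG := .node .hash ![]
def gamT (t : GTree Sg arG) : GTree Sg arG := .node .gam ![t]
def sigT (l r : GTree Sg arG) : GTree Sg arG := .node .sig ![l, r]

/-- γⁿ(t) -/
def gpow : ℕ → GTree Sg arG → GTree Sg arG
  | 0, t => t
  | n + 1, t => gamT (gpow n t)

/-- L_γγ = {σ(γⁿ#, γⁿ#) | n ∈ ℕ} -/
def Lgg : Set (GTree Sg arG) := {ξ | ∃ n, ξ = sigT (gpow n hashT) (gpow n hashT)}

/-- L₃ = {γⁿ(σ(γⁿ#, γⁿ#)) | n ∈ ℕ} -/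
def L3 : Set (GTree Sg arG) := {ξ | ∃ n, ξ = gpow n (sigT (gpow n hashT) (gpow n hashT))}

/-! Linear PTAR are strictly less expressive than PTAR: every language of a linear
PTAR is the language of a PTAR, and L₃ = {γⁿ(σ(γⁿ#,γⁿ#)) | n ∈ ℕ} is recognized by a
PTAR (indeed by one without any resets, i.e. a PTA), but by no linear PTAR. -/

/-! ### Fin helpers for the concrete arities -/

def g0 : Fin (arG Sg.gam) := ⟨0, Nat.one_pos⟩
def s0 : Fin (arG Sg.sig) := ⟨0, by show 0 < 2; norm_num⟩
def s1 : Fin (arG Sg.sig) := ⟨1, by show 1 < 2; norm_num⟩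

lemma gam_eq (i : Fin (arG Sg.gam)) : i = g0 := by
  have h : (i : ℕ) < 1 := i.isLt
  exact Fin.ext (by show (i : ℕ) = 0; omega)

lemma sig_cases (i : Fin (arG Sg.sig)) : i = s0 ∨ i = s1 := by
  have h : (i : ℕ) < 2 := i.isLt
  interval_cases h' : (i : ℕ)
  · exact Or.inl (Fin.ext h')
  · exact Or.inr (Fin.ext h')

lemma gam_eta (c : Fin (arG Sg.gam) → GTree Sg arG) :
    GTree.node Sg.gam c = gamT (c g0) := by
  have h : c = (![c g0] : Fin 1 → GTree Sg arG) := by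
    funext i
    rw [gam_eq i]
    exact rfl
  exact congrArg _ h

lemma sig_eta (c : Fin (arG Sg.sig) → GTree Sg arG) :
    GTree.node Sg.sig c = sigT (c s0) (c s1) := by
  have h : c = (![c s0, c s1] : Fin 2 → GTree Sg arG) := by
    funext i
    rcases sig_cases i with rfl | rfl <;> rfl
  exact congrArg _ h

lemma hash_eta (c : Fin (arG Sg.hash) → GTree Sg arG) :
    GTree.node Sg.hash c = hashT := by
  have h : c = (![] : Fin 0 → GTree Sg arG) := by
    funext i
    exact i.elim0
  exact congrArg _ h
/-! ### Auxiliary lemmas: injectivity of tree constructors -/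

lemma node_inj {S : Type} {ar : S → ℕ} {s : S} {c c' : Fin (ar s) → GTree S ar}
    (h : GTree.node s c = GTree.node s c') : c = c' := by
  injection h with h1 h2

lemma gamT_inj {t t' : GTree Sg arG} (h : gamT t = gamT t') : t = t' := by
  have := node_inj (s := Sg.gam) h
  have : (![t] : Fin (arG .gam) → _) 0 = ![t'] 0 := by rw [this]
  simpa using this

lemma sigT_inj {a b a' b' : GTree Sg arG} (h : sigT a b = sigT a' b') :
    a = a' ∧ b = b' := by
  have hc := node_inj (s := Sg.sig) h
  constructor
  · have : (![a, b] : Fin (arG .sig) → _) 0 = ![a', b'] 0 := by rw [hc]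
    simpa using this
  · have : (![a, b] : Fin (arG .sig) → _) 1 = ![a', b'] 1 := by rw [hc]
    simpa using this

lemma gpow_sig_inj : ∀ n k {x y u v : GTree Sg arG},
    gpow n (sigT x y) = gpow k (sigT u v) → n = k ∧ x = u ∧ y = v := by
  intro n
  induction n with
  | zero =>
    intro k x y u v h
    cases k with
    | zero => exact ⟨rfl, sigT_inj h⟩
    | succ k => exact absurd h (by simp [gpow, sigT, gamT]; intro h'; injection h' with h1 h2; cases h1)
  | succ n ih =>
    intro k x y u v h
    cases k with
    | zero => exact absurd h (by simp [gpow, sigT, gamT]; intro h'; injection h' with h1 h2; cases h1)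
    | succ k =>
      obtain ⟨h1, h2, h3⟩ := ih k (gamT_inj h)
      exact ⟨by omega, h2, h3⟩

lemma gpow_hash_inj : ∀ n k, gpow n hashT = gpow k hashT → n = k := by
  intro n
  induction n with
  | zero =>
    intro k h
    cases k with
    | zero => rfl
    | succ k => exact absurd h (by simp [gpow, hashT, gamT]; intro h'; injection h' with h1 h2; cases h1)
  | succ n ih =>
    intro k h
    cases k with
    | zero => exact absurd h (by simp [gpow, hashT, gamT]; intro h'; injection h' with h1 h2; cases h1)
    | succ k => rw [ih k (gamT_inj h)]
/-! ### A PTA (no resets) recognizing L₃ -/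

def B2 : PTAR Sg arG 2 where
  Q := Bool
  finQ := inferInstance
  init := false
  D := {![1, 0], ![0, 1], 0}
  trans q s f :=
    match s with
    | .gam => (q = false ∧ f = fun _ => (false, some ![1, 0])) ∨
              (q = true ∧ f = fun _ => (true, some ![0, 1]))
    | .sig => q = false ∧ f = fun _ => (true, some 0)
    | .hash => q = true
  transD := by
    rintro q s f ht i d hd
    cases s with
    | gam => rcases ht with ⟨_, rfl⟩ | ⟨_, rfl⟩ <;> simp_all
    | sig => obtain ⟨_, rfl⟩ := ht; simp_all
    | hash => exact i.elim0
  C := {v | v 0 = v 1}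
  semiC := by
    refine ⟨1, fun _ => {v | v 0 = v 1}, fun _ => ⟨1, 0, fun _ => ![1, 1], ?_⟩,
      (Set.iUnion_const _).symm⟩
    ext v
    simp only [Set.mem_setOf_eq]
    constructor
    · intro h
      refine ⟨fun _ => v 0, ?_⟩
      funext i
      fin_cases i <;> simp [h]
    · rintro ⟨c, rfl⟩
      simp

lemma B2_hash_acc (w : Fin 2 → ℕ) (h : w 0 = w 1) : B2.Acc true w hashT := by
  show B2.Acc true w (GTree.node Sg.hash ![])
  apply PTAR.Acc.node (f := fun _ => (true, none))
  · exact rfl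
  · exact fun _ => h
  · exact fun i => i.elim0


lemma B2_bot_acc : ∀ (n : ℕ) (w : Fin 2 → ℕ), w 0 = w 1 + n →
    B2.Acc true w (gpow n hashT) := by
  intro n
  induction n with
  | zero => intro w h; exact B2_hash_acc w (by simpa using h)
  | succ n ih =>
    intro w h
    show B2.Acc true w (GTree.node Sg.gam ![gpow n hashT])
    refine PTAR.Acc.node (f := fun _ => (true, some ![0, 1])) (Or.inr ⟨rfl, rfl⟩)
      (fun h' => by exact absurd h' one_ne_zero) ?_
    intro i
    rw [gam_eq i]
    show B2.Acc true (w + ![0, 1]) (gpow n hashT)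
    refine ih _ ?_
    simp
    omega

lemma B2_top_acc : ∀ (n : ℕ) (w : Fin 2 → ℕ) (k : ℕ), w 0 + n = w 1 + k →
    B2.Acc false w (gpow n (sigT (gpow k hashT) (gpow k hashT))) := by
  intro n
  induction n with
  | zero =>
    intro w k h
    show B2.Acc false w (GTree.node Sg.sig ![gpow k hashT, gpow k hashT])
    refine PTAR.Acc.node (f := fun _ => (true, some 0)) ⟨rfl, rfl⟩
      (fun h' => by exact absurd h' two_ne_zero) ?_
    intro i
    rcases sig_cases i with rfl | rfl
    · show B2.Acc true (w + 0) (gpow k hashT)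
      exact B2_bot_acc k _ (by simpa using h)
    · show B2.Acc true (w + 0) (gpow k hashT)
      exact B2_bot_acc k _ (by simpa using h)
  | succ n ih =>
    intro w k h
    show B2.Acc false w (GTree.node Sg.gam ![gpow n (sigT (gpow k hashT) (gpow k hashT))])
    refine PTAR.Acc.node (f := fun _ => (false, some ![1, 0])) (Or.inl ⟨rfl, rfl⟩)
      (fun h' => by exact absurd h' one_ne_zero) ?_
    intro i
    rw [gam_eq i]
    show B2.Acc false (w + ![1, 0]) (gpow n (sigT (gpow k hashT) (gpow k hashT)))
    refine ih _ k ?_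
    simp
    omega

lemma B2_inv : ∀ {q : Bool} {w : Fin 2 → ℕ} {t : GTree Sg arG}, B2.Acc q w t →
    (q = true ∧ ∃ k, t = gpow k hashT ∧ w 0 = w 1 + k) ∨
    (q = false ∧ ∃ n k, t = gpow n (sigT (gpow k hashT) (gpow k hashT)) ∧
      w 0 + n = w 1 + k) := by
  show ∀ {q : B2.Q} {w : Fin 2 → ℕ} {t : GTree Sg arG}, B2.Acc q w t →
    (q = true ∧ ∃ k, t = gpow k hashT ∧ w 0 = w 1 + k) ∨
    (q = false ∧ ∃ n k, t = gpow n (sigT (gpow k hashT) (gpow k hashT)) ∧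
      w 0 + n = w 1 + k)
  intro q w t h
  induction h with
  | @node q w s f c ht hC hc ih =>
    cases s with
    | hash =>
      left
      exact ⟨ht, 0, hash_eta c, by have h0 : w 0 = w 1 := hC rfl; simpa using h0⟩
    | gam =>
      rcases ht with ⟨hq, hf⟩ | ⟨hq, hf⟩
      · subst hq hf
        rcases ih g0 with ⟨h1, _⟩ | ⟨_, n, k, hct, hw⟩
        · simp at h1
        · right
          refine ⟨rfl, n + 1, k, ?_, ?_⟩
          · rw [gam_eta c, hct]; rfl
          · have hw' : w 0 + 1 + n = (w 1 + 0) + k := by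
              simpa [updW] using hw
            omega
      · subst hq hf
        rcases ih g0 with ⟨_, k, hct, hw⟩ | ⟨h1, _⟩
        · left
          refine ⟨rfl, k + 1, ?_, ?_⟩
          · rw [gam_eta c, hct]; rfl
          · have hw' : w 0 + 0 = (w 1 + 1) + k := by
              simpa [updW] using hw
            omega
        · simp at h1
    | sig =>
      obtain ⟨hq, hf⟩ := ht
      subst hq hf
      rcases ih s0 with ⟨_, k0, hct0, hw0⟩ | ⟨h1, _⟩
      · rcases ih s1 with ⟨_, k1, hct1, hw1⟩ | ⟨h1, _⟩
        · right
          have hw0' : w 0 = w 1 + k0 := by simpa [updW] using hw0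
          have hw1' : w 0 = w 1 + k1 := by simpa [updW] using hw1
          have hk : k0 = k1 := by omega
          subst hk
          exact ⟨rfl, 0, k0, by rw [sig_eta c, hct0, hct1]; rfl, by omega⟩
        · simp at h1
      · simp at h1

lemma B2_lang : B2.Lang = L3 := by
  ext ξ
  constructor
  · intro h
    rcases B2_inv h with ⟨h1, _⟩ | ⟨_, n, k, ht, hw⟩
    · exact absurd h1 (by simp [B2])
    · have : n = k := by simp at hw; omega
      subst this
      exact ⟨n, ht⟩
  · rintro ⟨n, rfl⟩
    exact B2_top_acc n 0 n (by simp)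
/-! ### No linear PTAR recognizes L₃ -/

lemma acc_node_inv {m : ℕ} {A : PTAR Sg arG m} {q : A.Q} {w : Fin m → ℕ} {s : Sg}
    {c : Fin (arG s) → GTree Sg arG} (h : A.Acc q w (GTree.node s c)) :
    ∃ f, A.trans q s f ∧ (arG s = 0 → w ∈ A.C) ∧
      ∀ i, A.Acc (f i).1 (updW w (f i).2) (c i) := by
  cases h with
  | node ht hC hc => exact ⟨_, ht, hC, hc⟩

lemma s0_ne_s1 : s0 ≠ s1 := by
  intro h
  have := congrArg Fin.val h
  simp [s0, s1] at this

lemma splice {m : ℕ} (A : PTAR Sg arG m) (hlin : A.IsLinear) :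
    ∀ (k : ℕ) (q : A.Q) (w : Fin m → ℕ) (a b : GTree Sg arG),
      A.Acc q w (gpow k (sigT a b)) →
      ∃ r : A.Q,
        (A.Acc r 0 a ∧ ∀ t, A.Acc r 0 t → A.Acc q w (gpow k (sigT t b))) ∨
        (A.Acc r 0 b ∧ ∀ t, A.Acc r 0 t → A.Acc q w (gpow k (sigT a t))) := by
  intro k
  induction k with
  | zero =>
    intro q w a b h
    have h' : A.Acc q w (GTree.node Sg.sig ![a, b]) := h
    obtain ⟨f, ht, hC, hc⟩ := acc_node_inv h'
    have ha : A.Acc (f s0).1 (updW w (f s0).2) a := hc s0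
    have hb : A.Acc (f s1).1 (updW w (f s1).2) b := hc s1
    have hnone : (f s0).2 = none ∨ (f s1).2 = none := by
      by_contra hcon
      push_neg at hcon
      exact s0_ne_s1 (hlin q Sg.sig f ht s0 s1 hcon.1 hcon.2)
    rcases hnone with h0 | h1
    · refine ⟨(f s0).1, Or.inl ⟨?_, ?_⟩⟩
      · rw [h0] at ha; exact ha
      · intro t hti
        show A.Acc q w (GTree.node Sg.sig ![t, b])
        refine PTAR.Acc.node ht hC ?_
        intro i
        rcases sig_cases i with rfl | rfl
        · show A.Acc (f s0).1 (updW w (f s0).2) t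
          rw [h0]; exact hti
        · exact hb
    · refine ⟨(f s1).1, Or.inr ⟨?_, ?_⟩⟩
      · rw [h1] at hb; exact hb
      · intro t hti
        show A.Acc q w (GTree.node Sg.sig ![a, t])
        refine PTAR.Acc.node ht hC ?_
        intro i
        rcases sig_cases i with rfl | rfl
        · exact ha
        · show A.Acc (f s1).1 (updW w (f s1).2) t
          rw [h1]; exact hti
  | succ k ih =>
    intro q w a b h
    have h' : A.Acc q w (GTree.node Sg.gam ![gpow k (sigT a b)]) := h
    obtain ⟨f, ht, hC, hc⟩ := acc_node_inv h'
    have hg : A.Acc (f g0).1 (updW w (f g0).2) (gpow k (sigT a b)) := hc g0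
    obtain ⟨r, hd⟩ := ih (f g0).1 (updW w (f g0).2) a b hg
    have rebuild : ∀ t' : GTree Sg arG,
        A.Acc (f g0).1 (updW w (f g0).2) t' →
        A.Acc q w (GTree.node Sg.gam ![t']) := by
      intro t' ht'
      refine PTAR.Acc.node ht hC ?_
      intro i
      rw [gam_eq i]
      exact ht'
    rcases hd with ⟨h1, h2⟩ | ⟨h1, h2⟩
    · exact ⟨r, Or.inl ⟨h1, fun t hti => rebuild _ (h2 t hti)⟩⟩
    · exact ⟨r, Or.inr ⟨h1, fun t hti => rebuild _ (h2 t hti)⟩⟩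

lemma no_linear_L3 : ¬ ∃ (m : ℕ) (A : PTAR Sg arG m), A.IsLinear ∧ A.Lang = L3 := by
  rintro ⟨m, A, hlin, hL⟩
  haveI := A.finQ
  have hAcc : ∀ n : ℕ, A.Acc A.init 0 (gpow n (sigT (gpow n hashT) (gpow n hashT))) := by
    intro n
    have hmem : gpow n (sigT (gpow n hashT) (gpow n hashT)) ∈ A.Lang := by
      rw [hL]; exact ⟨n, rfl⟩
    exact hmem
  have key : ∀ n, ∃ r : A.Q, A.Acc r 0 (gpow n hashT) ∧ ∀ t, A.Acc r 0 t →
      (A.Acc A.init 0 (gpow n (sigT t (gpow n hashT))) ∨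
       A.Acc A.init 0 (gpow n (sigT (gpow n hashT) t))) := by
    intro n
    obtain ⟨r, hd⟩ := splice A hlin n A.init 0 _ _ (hAcc n)
    rcases hd with ⟨h1, h2⟩ | ⟨h1, h2⟩
    · exact ⟨r, h1, fun t ht => Or.inl (h2 t ht)⟩
    · exact ⟨r, h1, fun t ht => Or.inr (h2 t ht)⟩
  choose r hr1 hr2 using key
  obtain ⟨n, n', hne, hrr⟩ := Finite.exists_ne_map_eq_of_infinite r
  have hacc : A.Acc (r n') 0 (gpow n hashT) := hrr ▸ hr1 n
  rcases hr2 n' _ hacc with h | h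
  · have hmem : gpow n' (sigT (gpow n hashT) (gpow n' hashT)) ∈ A.Lang := h
    rw [hL] at hmem
    obtain ⟨k, hk⟩ := hmem
    obtain ⟨hk1, hk2, _⟩ := gpow_sig_inj n' k hk
    have := gpow_hash_inj n k hk2
    exact hne (by omega)
  · have hmem : gpow n' (sigT (gpow n' hashT) (gpow n hashT)) ∈ A.Lang := h
    rw [hL] at hmem
    obtain ⟨k, hk⟩ := hmem
    obtain ⟨hk1, _, hk3⟩ := gpow_sig_inj n' k hk
    have := gpow_hash_inj n k hk3
    exact hne (by omega)
theorem linear_ptar_strictly_weaker :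
    (∀ (m : ℕ) (A : PTAR Sg arG m), A.IsLinear → ∃ B : PTAR Sg arG m, B.Lang = A.Lang) ∧
    (∃ (m : ℕ) (B : PTAR Sg arG m),
      (∀ (q : B.Q) (s : Sg) (f : Fin (arG s) → B.Q × Option (Fin m → ℕ)),
        B.trans q s f → ∀ i, (f i).2 ≠ none) ∧ B.Lang = L3) ∧
    ¬ ∃ (m : ℕ) (A : PTAR Sg arG m), A.IsLinear ∧ A.Lang = L3 := by
  refine ⟨fun m A _ => ⟨A, rfl⟩, ⟨2, B2, ?_, B2_lang⟩, no_linear_L3⟩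
  intro q s f ht i
  cases s with
  | gam => rcases ht with ⟨_, rfl⟩ | ⟨_, rfl⟩ <;> simp
  | sig => obtain ⟨_, rfl⟩ := ht; simp
  | hash => exact i.elim0
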